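/- Define (AᵀΓ⁻¹A)⁻ := S D⁺ S⁻¹ C₀, where C₀AᵀΓ⁻¹A = S D S⁻¹ and D⁺ is the diagonal pseudo-inverse of D. Then (AᵀΓ⁻¹A)⁻ (AᵀΓ⁻¹A) (AᵀΓ⁻¹A)⁻ = (AᵀΓ⁻¹A)⁻ and (AᵀΓ⁻¹A)(AᵀΓ⁻¹A)⁻(AᵀΓ⁻¹A) = AᵀΓ⁻¹A, but (AᵀΓ⁻¹A)⁻(AᵀΓ⁻¹A) = S D⁺D S⁻¹ need not be symmetric (so (AᵀΓ⁻¹A)⁻ is in general not the Moore–Penrose pseudo-inverse). -/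

import Mathlib

open Matrix

theorem generalized_inverse_properties {n m k : ℕ} (hk : k ≤ n)
    (C₀ : Matrix (Fin n) (Fin n) ℝ) (hC₀ : C₀.PosDef)
    (A : Matrix (Fin m) (Fin n) ℝ)
    (Γ : Matrix (Fin m) (Fin m) ℝ) (hΓ : Γ.PosDef)
    (S : Matrix (Fin n) (Fin n) ℝ) (μ : Fin n → ℝ)
    (hS : IsUnit S.det)
    (hμpos : ∀ i : Fin n, (i : ℕ) < k → 0 < μ i)
    (hμzero : ∀ i : Fin n, k ≤ (i : ℕ) → μ i = 0)
    (hdiag : C₀ * Aᵀ * Γ⁻¹ * A = S * Matrix.diagonal μ * S⁻¹)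
    (Minus : Matrix (Fin n) (Fin n) ℝ)
    (hMinus : Minus =
      S * Matrix.diagonal (fun i => if μ i = 0 then (0 : ℝ) else (μ i)⁻¹) * S⁻¹ * C₀) :
    Minus * (Aᵀ * Γ⁻¹ * A) * Minus = Minus ∧
    (Aᵀ * Γ⁻¹ * A) * Minus * (Aᵀ * Γ⁻¹ * A) = Aᵀ * Γ⁻¹ * A ∧
    Minus * (Aᵀ * Γ⁻¹ * A) =
      S * Matrix.diagonal (fun i => if μ i = 0 then (0 : ℝ) else (μ i)⁻¹) *
        Matrix.diagonal μ * S⁻¹ ∧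
    -- in general `(AᵀΓ⁻¹A)⁻(AᵀΓ⁻¹A) = S D⁺D S⁻¹` is not symmetric:
    ∃ (n' m' : ℕ) (C₀' : Matrix (Fin n') (Fin n') ℝ) (A' : Matrix (Fin m') (Fin n') ℝ)
      (Γ' : Matrix (Fin m') (Fin m') ℝ) (S' : Matrix (Fin n') (Fin n') ℝ)
      (μ' : Fin n' → ℝ),
      C₀'.PosDef ∧ Γ'.PosDef ∧ IsUnit S'.det ∧ (∀ i, 0 ≤ μ' i) ∧
      C₀' * A'ᵀ * Γ'⁻¹ * A' = S' * Matrix.diagonal μ' * S'⁻¹ ∧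
      ¬ (S' * Matrix.diagonal (fun i => if μ' i = 0 then (0 : ℝ) else (μ' i)⁻¹) *
          Matrix.diagonal μ' * S'⁻¹).IsSymm := by
  haveI : Invertible S := S.invertibleOfIsUnitDet hS
  haveI : Invertible C₀ := hC₀.isUnit.invertible
  set P : Matrix (Fin n) (Fin n) ℝ :=
    Matrix.diagonal (fun i => if μ i = 0 then (0 : ℝ) else (μ i)⁻¹) with hP
  set D : Matrix (Fin n) (Fin n) ℝ := Matrix.diagonal μ with hD
  have hdiag' : C₀ * (Aᵀ * (Γ⁻¹ * A)) = S * (D * S⁻¹) := by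
    simpa [Matrix.mul_assoc] using hdiag
  have hM : Aᵀ * (Γ⁻¹ * A) = C₀⁻¹ * (S * (D * S⁻¹)) := by
    have := congrArg (fun X => C₀⁻¹ * X) hdiag'
    simpa [Matrix.inv_mul_cancel_left_of_invertible] using this
  have hPDP0 : P * D * P = P := by
    rw [hP, hD, Matrix.diagonal_mul_diagonal, Matrix.diagonal_mul_diagonal]
    refine congrArg Matrix.diagonal (funext fun i => ?_)
    by_cases h : μ i = 0
    · simp [h]
    · simp only [if_neg h, inv_mul_cancel₀ h, one_mul]
  have hDPD0 : D * P * D = D := by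
    rw [hP, hD, Matrix.diagonal_mul_diagonal, Matrix.diagonal_mul_diagonal]
    refine congrArg Matrix.diagonal (funext fun i => ?_)
    by_cases h : μ i = 0
    · simp [h]
    · simp only [if_neg h, mul_inv_cancel₀ h, one_mul]
  have hPDP : ∀ X : Matrix (Fin n) (Fin n) ℝ, P * (D * (P * X)) = P * X := fun X => by
    rw [← Matrix.mul_assoc, ← Matrix.mul_assoc, hPDP0]
  have hDPD : ∀ X : Matrix (Fin n) (Fin n) ℝ, D * (P * (D * X)) = D * X := fun X => by
    rw [← Matrix.mul_assoc, ← Matrix.mul_assoc, hDPD0]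
  have key3 : Minus * (Aᵀ * Γ⁻¹ * A) = S * P * D * S⁻¹ := by
    rw [hMinus]
    simp only [Matrix.mul_assoc, hdiag', Matrix.inv_mul_cancel_left_of_invertible]
  refine ⟨?_, ?_, key3, ?_⟩
  · rw [key3, hMinus]
    simp only [Matrix.mul_assoc, Matrix.inv_mul_cancel_left_of_invertible]
    rw [hPDP]
  · rw [hMinus]
    simp only [Matrix.mul_assoc, hM]
    simp only [Matrix.inv_mul_cancel_left_of_invertible,
      Matrix.mul_inv_cancel_left_of_invertible]
    rw [hDPD]
  · refine ⟨2, 1, !![1,1;1,2], !![1,0], 1, !![1,0;1,1], ![1,0], ?_, Matrix.PosDef.one, ?_, ?_, ?_, ?_⟩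
    · rw [Matrix.posDef_iff_dotProduct_mulVec]
      constructor
      · ext i j
        fin_cases i <;> fin_cases j <;> simp [Matrix.conjTranspose_apply]
      · intro x hx
        have hx' : x 0 ≠ 0 ∨ x 1 ≠ 0 := by
          by_contra h
          push_neg at h
          exact hx (funext fun i => by fin_cases i <;> simp [h.1, h.2])
        have : dotProduct (star x) ((!![1,1;1,2] : Matrix (Fin 2) (Fin 2) ℝ) *ᵥ x)
            = (x 0 + x 1)^2 + (x 1)^2 := by
          simp [dotProduct, Matrix.mulVec, Fin.sum_univ_two]
          ring
        rw [this]
        by_cases h1 : x 1 = 0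
        · have h0 : x 0 ≠ 0 := by
            rcases hx' with h | h
            · exact h
            · exact absurd h1 h
          have : 0 < x 0 ^ 2 := by positivity
          rw [h1]
          nlinarith
        · have : 0 < x 1 ^ 2 := by positivity
          nlinarith [sq_nonneg (x 0 + x 1)]
    · simp [Matrix.det_fin_two_of]
    · intro i; fin_cases i <;> norm_num
    · have hinv : (!![1,0;1,1] : Matrix (Fin 2) (Fin 2) ℝ)⁻¹ = !![1,0;-1,1] := by
        rw [Matrix.inv_def]
        norm_num [Matrix.det_fin_two_of, Matrix.adjugate_fin_two_of]
      rw [hinv]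
      ext i j
      fin_cases i <;> fin_cases j <;>
        simp only [Matrix.mul_apply, Fin.sum_univ_two, Fin.sum_univ_one,
          Matrix.transpose_apply, inv_one, Matrix.one_apply, Matrix.diagonal_apply,
          Matrix.cons_val', Matrix.cons_val_zero, Matrix.cons_val_one, Matrix.head_cons,
          Matrix.of_apply, Matrix.cons_val_fin_one, Matrix.head_fin_const] <;> norm_num
    · have hinv : (!![1,0;1,1] : Matrix (Fin 2) (Fin 2) ℝ)⁻¹ = !![1,0;-1,1] := by
        rw [Matrix.inv_def]
        norm_num [Matrix.det_fin_two_of, Matrix.adjugate_fin_two_of]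
      have hpd : (Matrix.diagonal (fun i => if (![1,0] : Fin 2 → ℝ) i = 0 then (0 : ℝ)
          else ((![1,0] : Fin 2 → ℝ) i)⁻¹)) = Matrix.diagonal ![1,0] := by
        refine congrArg Matrix.diagonal (funext fun i => ?_)
        fin_cases i <;> norm_num
      rw [hinv, hpd]
      intro h
      have h01 := congrFun (congrFun h.eq 0) 1
      simp only [Matrix.transpose_apply, Matrix.mul_apply, Fin.sum_univ_two,
        Matrix.diagonal_apply, Matrix.cons_val', Matrix.cons_val_zero, Matrix.cons_val_one,
        Matrix.head_cons, Matrix.of_apply, Matrix.cons_val_fin_one,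
        Matrix.head_fin_const] at h01
      norm_num at h01
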